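/- Let D = (V, A, ψ) be a balanced multidigraph. Let k be a natural number. For any two vertices s, t ∈ V, the number γ_k(s) of s-convergences of size k equals the number γ_k(t) of t-convergences of size k. -/

import Mathlib

/-!
A multidigraph is given by two finite types `V` (vertices) and `A` (arcs)
together with a map `ψ : A → V × V` sending each arc to its (source, target) pair.
For a subset `B ⊆ A`, the induced subdigraph `D⟨B⟩` has vertex set `V` and arc set `B`.
-/

/-- There is an arc of `B` from `v` to `w` in the subdigraph `D⟨B⟩`. -/
def ArcStep {V A : Type*} (ψ : A → V × V) (B : Set A) (v w : V) : Prop :=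
  ∃ a ∈ B, ψ a = (v, w)

/-- `v` can `B`-reach `w`: the subdigraph `D⟨B⟩` has a walk from `v` to `w`. -/
def CanReach {V A : Type*} (ψ : A → V × V) (B : Set A) (v w : V) : Prop :=
  Relation.ReflTransGen (ArcStep ψ B) v w

/-- `B ⊆ A` is acyclic: the subdigraph `D⟨B⟩` has no directed cycles
(equivalently, no closed walk of positive length). -/
def IsAcyclic {V A : Type*} (ψ : A → V × V) (B : Set A) : Prop :=
  ∀ v : V, ¬ Relation.TransGen (ArcStep ψ B) v v

/-- `B` is an `s`-convergence: `B` is acyclic and `s` is a to-root of `D⟨B⟩`,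
i.e. every vertex can `B`-reach `s`. -/
def IsConvergence {V A : Type*} (ψ : A → V × V) (B : Set A) (s : V) : Prop :=
  IsAcyclic ψ B ∧ ∀ v : V, CanReach ψ B v s

/-- `γ_k(s)`: the number of `s`-convergences of size `k`. -/
noncomputable def gammaCount {V A : Type*} (ψ : A → V × V) (k : ℕ) (s : V) : ℕ :=
  {B : Set A | IsConvergence ψ B s ∧ B.ncard = k}.ncard

/-- The attraction basin of `s` with respect to `B`: all vertices that can `B`-reach `s`. -/
def basin {V A : Type*} (ψ : A → V × V) (B : Set A) (s : V) : Set V :=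
  {v : V | CanReach ψ B v s}

/-- `A(P,Q)`: the set of arcs with source in `P` and target in `Q`. -/
def arcsFromTo {V A : Type*} (ψ : A → V × V) (P Q : Set V) : Set A :=
  {a : A | (ψ a).1 ∈ P ∧ (ψ a).2 ∈ Q}

/-- The outdegree of a vertex: the number of arcs with source `v`. -/
noncomputable def outDeg {V A : Type*} (ψ : A → V × V) (v : V) : ℕ :=
  {a : A | (ψ a).1 = v}.ncard

/-- The indegree of a vertex: the number of arcs with target `v`. -/
noncomputable def inDeg {V A : Type*} (ψ : A → V × V) (v : V) : ℕ :=
  {a : A | (ψ a).2 = v}.ncard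

/-- The digraph is balanced: each vertex has outdegree equal to indegree. -/
def IsBalanced {V A : Type*} (ψ : A → V × V) : Prop :=
  ∀ v : V, outDeg ψ v = inDeg ψ v

/-- `U_k`: the set of all acyclic `k`-element subsets `B` of `A` such that each
vertex can `B`-reach `s` or can `B`-reach `t`. -/
def Uset {V A : Type*} (ψ : A → V × V) (s t : V) (k : ℕ) : Set (Set A) :=
  {B : Set A | IsAcyclic ψ B ∧ B.ncard = k ∧ basin ψ B s ∪ basin ψ B t = Set.univ}

/-- `X_i^{P,Q}`: the set of all acyclic `i`-element subsets `B` of `A` with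
`S(B) = P` and `T(B) = Q` (empty for negative `i`). -/
def Xset {V A : Type*} (ψ : A → V × V) (s t : V) (P Q : Set V) (i : ℤ) : Set (Set A) :=
  {B : Set A | IsAcyclic ψ B ∧ (B.ncard : ℤ) = i ∧ basin ψ B s = P ∧ basin ψ B t = Q}

/-- `|X_i^{P,Q}|`. -/
noncomputable def Xcount {V A : Type*} (ψ : A → V × V) (s t : V) (P Q : Set V) (i : ℤ) : ℕ :=
  (Xset ψ s t P Q i).ncard

section Aux

variable {V A : Type*}

private lemma arcStep_mono {ψ : A → V × V} {B B' : Set A} (h : B ⊆ B') :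
    ∀ u v, ArcStep ψ B u v → ArcStep ψ B' u v := fun _ _ ⟨a, ha, he⟩ => ⟨a, h ha, he⟩

private lemma canReach_mono {ψ : A → V × V} {B B' : Set A} (h : B ⊆ B') {u v : V}
    (hr : CanReach ψ B u v) : CanReach ψ B' u v :=
  Relation.ReflTransGen.mono (r := ArcStep ψ B) (fun a b hab => arcStep_mono h a b hab) _ _ hr

private lemma self_mem_basin (ψ : A → V × V) (B : Set A) (x : V) : x ∈ basin ψ B x :=
  Relation.ReflTransGen.refl

private lemma basin_head {ψ : A → V × V} {B : Set A} {x : V} {a : A} (ha : a ∈ B)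
    (h2 : (ψ a).2 ∈ basin ψ B x) : (ψ a).1 ∈ basin ψ B x :=
  Relation.ReflTransGen.head ⟨a, ha, rfl⟩ h2

/-- Reachability confined to a forward-closed set. -/
private lemma reach_confine {ψ : A → V × V} {B : Set A} {W : Set V}
    (hW : ∀ a ∈ B, (ψ a).1 ∈ W → (ψ a).2 ∈ W) {u v : V} (hu : u ∈ W)
    (h : CanReach ψ B u v) :
    v ∈ W ∧ CanReach ψ (B ∩ arcsFromTo ψ W W) u v := by
  induction h with
  | refl => exact ⟨hu, Relation.ReflTransGen.refl⟩
  | tail hab hbc ih =>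
    obtain ⟨hbW, hr⟩ := ih
    obtain ⟨a, haB, hae⟩ := hbc
    have h1 : (ψ a).1 ∈ W := by rw [hae]; exact hbW
    have h2 := hW a haB h1
    refine ⟨by rw [hae] at h2; exact h2, hr.tail ⟨a, ⟨haB, h1, h2⟩, hae⟩⟩

/-- A walk to `x` can be taken inside the basin of `x`. -/
private lemma reach_restrict_basin {ψ : A → V × V} {B : Set A} {x u : V}
    (h : CanReach ψ B u x) :
    CanReach ψ (B ∩ arcsFromTo ψ (basin ψ B x) (basin ψ B x)) u x := by
  induction h using Relation.ReflTransGen.head_induction_on with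
  | refl => exact Relation.ReflTransGen.refl
  | head hstep htail ih =>
    obtain ⟨a, haB, hae⟩ := hstep
    refine Relation.ReflTransGen.head ⟨a, ⟨haB, ?_, ?_⟩, hae⟩ ih
    · show CanReach _ _ _ _
      rw [hae]
      exact Relation.ReflTransGen.head ⟨a, haB, hae⟩ htail
    · show CanReach _ _ _ _
      rw [hae]
      exact htail

private lemma transGen_confine_fwd {ψ : A → V × V} {B : Set A} {W : Set V}
    (hW : ∀ a ∈ B, (ψ a).1 ∈ W → (ψ a).2 ∈ W) {u v : V} (hu : u ∈ W)
    (h : Relation.TransGen (ArcStep ψ B) u v) :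
    v ∈ W ∧ Relation.TransGen (ArcStep ψ (B ∩ arcsFromTo ψ W W)) u v := by
  induction h with
  | single hstep =>
    obtain ⟨a, haB, hae⟩ := hstep
    have h1 : (ψ a).1 ∈ W := by rw [hae]; exact hu
    have h2 := hW a haB h1
    exact ⟨by rw [hae] at h2; exact h2, Relation.TransGen.single ⟨a, ⟨haB, h1, h2⟩, hae⟩⟩
  | tail hab hbc ih =>
    obtain ⟨hbW, hr⟩ := ih
    obtain ⟨a, haB, hae⟩ := hbc
    have h1 : (ψ a).1 ∈ W := by rw [hae]; exact hbW
    have h2 := hW a haB h1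
    exact ⟨by rw [hae] at h2; exact h2, hr.tail ⟨a, ⟨haB, h1, h2⟩, hae⟩⟩

private lemma transGen_confine_bwd {ψ : A → V × V} {B : Set A} {W : Set V}
    (hW : ∀ a ∈ B, (ψ a).1 ∈ W → (ψ a).2 ∈ W) {u v : V} (hv : v ∈ Wᶜ)
    (h : Relation.TransGen (ArcStep ψ B) u v) :
    u ∈ Wᶜ ∧ Relation.TransGen (ArcStep ψ (B ∩ arcsFromTo ψ Wᶜ Wᶜ)) u v := by
  induction h using Relation.TransGen.head_induction_on with
  | single hstep =>
    obtain ⟨a, haB, hae⟩ := hstep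
    have h2 : (ψ a).2 ∈ Wᶜ := by rw [hae]; exact hv
    have h1 : (ψ a).1 ∈ Wᶜ := fun hmem => h2 (hW a haB hmem)
    exact ⟨by rw [hae] at h1; exact h1, Relation.TransGen.single ⟨a, ⟨haB, h1, h2⟩, hae⟩⟩
  | head hstep htail ihh =>
    obtain ⟨hcW, hr⟩ := ihh
    obtain ⟨a, haB, hae⟩ := hstep
    have h2 : (ψ a).2 ∈ Wᶜ := by rw [hae]; exact hcW
    have h1 : (ψ a).1 ∈ Wᶜ := fun hmem => h2 (hW a haB hmem)
    exact ⟨by rw [hae] at h1; exact h1, Relation.TransGen.head ⟨a, ⟨haB, h1, h2⟩, hae⟩ hr⟩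

private lemma ncard_src_finset {ψ : A → V × V} [Fintype A] (hbal : IsBalanced ψ)
    [DecidableEq V] (Q : Finset V) :
    {a | (ψ a).1 ∈ Q}.ncard = {a | (ψ a).2 ∈ Q}.ncard := by
  classical
  induction Q using Finset.induction_on with
  | empty => simp
  | insert _ _ hni ih =>
    rename_i v Q'
    have h1 : {a | (ψ a).1 ∈ insert v Q'} = {a | (ψ a).1 = v} ∪ {a | (ψ a).1 ∈ Q'} := by
      ext a; simp [Finset.mem_insert]
    have h2 : {a | (ψ a).2 ∈ insert v Q'} = {a | (ψ a).2 = v} ∪ {a | (ψ a).2 ∈ Q'} := by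
      ext a; simp [Finset.mem_insert]
    have d1 : Disjoint {a : A | (ψ a).1 = v} {a : A | (ψ a).1 ∈ Q'} := by
      rw [Set.disjoint_left]; rintro a (rfl : (ψ a).1 = v) hmem; exact hni hmem
    have d2 : Disjoint {a : A | (ψ a).2 = v} {a : A | (ψ a).2 ∈ Q'} := by
      rw [Set.disjoint_left]; rintro a (rfl : (ψ a).2 = v) hmem; exact hni hmem
    rw [h1, h2, Set.ncard_union_eq d1 (Set.toFinite _) (Set.toFinite _),
      Set.ncard_union_eq d2 (Set.toFinite _) (Set.toFinite _), ih]
    have := hbal v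
    rw [outDeg, inDeg] at this
    rw [this]

private lemma cross_ncard_eq {ψ : A → V × V} [Fintype V] [Fintype A]
    (hbal : IsBalanced ψ) (P : Set V) :
    (arcsFromTo ψ P Pᶜ).ncard = (arcsFromTo ψ Pᶜ P).ncard := by
  classical
  have hsrc : {a : A | (ψ a).1 ∈ P} = arcsFromTo ψ P P ∪ arcsFromTo ψ P Pᶜ := by
    ext a; by_cases h : (ψ a).2 ∈ P <;> simp [arcsFromTo, h]
  have htgt : {a : A | (ψ a).2 ∈ P} = arcsFromTo ψ P P ∪ arcsFromTo ψ Pᶜ P := by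
    ext a; by_cases h : (ψ a).1 ∈ P <;> simp [arcsFromTo, h]
  have d1 : Disjoint (arcsFromTo ψ P P) (arcsFromTo ψ P Pᶜ) := by
    rw [Set.disjoint_left]; rintro a ⟨_, h2⟩ ⟨_, h2'⟩; exact h2' h2
  have d2 : Disjoint (arcsFromTo ψ P P) (arcsFromTo ψ Pᶜ P) := by
    rw [Set.disjoint_left]; rintro a ⟨h1, _⟩ ⟨h1', _⟩; exact h1' h1
  have hmain : {a : A | (ψ a).1 ∈ P}.ncard = {a : A | (ψ a).2 ∈ P}.ncard := by
    have := ncard_src_finset hbal P.toFinset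
    simpa using this
  rw [hsrc, htgt, Set.ncard_union_eq d1 (Set.toFinite _) (Set.toFinite _),
    Set.ncard_union_eq d2 (Set.toFinite _) (Set.toFinite _)] at hmain
  exact Nat.add_left_cancel hmain

private lemma existsSwapArcs {ψ : A → V × V} [Fintype V] [Fintype A]
    (hbal : IsBalanced ψ) (P : Set V) :
    ∃ g h : A → A, Set.BijOn g (arcsFromTo ψ P Pᶜ) (arcsFromTo ψ Pᶜ P) ∧
      Set.InvOn h g (arcsFromTo ψ P Pᶜ) (arcsFromTo ψ Pᶜ P) := by
  classical
  set S1 := arcsFromTo ψ P Pᶜ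
  set S2 := arcsFromTo ψ Pᶜ P
  have hc : Fintype.card S1 = Fintype.card S2 := by
    rw [← Set.toFinset_card, ← Set.toFinset_card,
      ← Set.ncard_eq_toFinset_card', ← Set.ncard_eq_toFinset_card']
    exact cross_ncard_eq hbal P
  obtain ⟨e⟩ : Nonempty (S1 ≃ S2) := ⟨Fintype.equivOfCardEq hc⟩
  refine ⟨fun a => if ha : a ∈ S1 then (e ⟨a, ha⟩ : A) else a,
    fun b => if hb : b ∈ S2 then (e.symm ⟨b, hb⟩ : A) else b, ⟨?_, ?_, ?_⟩, ?_, ?_⟩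
  · intro a ha; simp only [dif_pos ha]; exact (e ⟨a, ha⟩).2
  · intro a ha b hb heq
    simp only [dif_pos ha, dif_pos hb] at heq
    have := e.injective (Subtype.coe_injective heq)
    exact congrArg Subtype.val this
  · intro b hb
    refine ⟨(e.symm ⟨b, hb⟩ : A), (e.symm ⟨b, hb⟩).2, ?_⟩
    simp only [dif_pos (e.symm ⟨b, hb⟩).2, Subtype.coe_eta, Equiv.apply_symm_apply]
  · intro a ha
    beta_reduce
    rw [dif_pos ha, dif_pos (e ⟨a, ha⟩).2, Subtype.coe_eta, Equiv.symm_apply_apply]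
  · intro b hb
    beta_reduce
    rw [dif_pos hb, dif_pos (e.symm ⟨b, hb⟩).2, Subtype.coe_eta, Equiv.apply_symm_apply]

/-- The bridge-swapping move. -/
private def moveSet (B S : Set A) (g : A → A) : Set A := (B \ S) ∪ g '' (B ∩ S)

private lemma mem_moveSet {B S : Set A} {g : A → A} {a : A} :
    a ∈ moveSet B S g ↔ (a ∈ B ∧ a ∉ S) ∨ ∃ b, (b ∈ B ∧ b ∈ S) ∧ g b = a := by
  simp [moveSet, Set.mem_image, Set.mem_inter_iff]

/-- The core lemma: moving the bridges of `B` across the basin boundary. -/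
private lemma move_pack {ψ : A → V × V} [Fintype A] {x y : V} {B : Set A} {P : Set V}
    {g : A → A}
    (hP : basin ψ B x = P) (hacyc : IsAcyclic ψ B)
    (hU : basin ψ B x ∪ basin ψ B y = Set.univ) (hne : P ≠ Set.univ)
    (hg : Set.BijOn g (arcsFromTo ψ P Pᶜ) (arcsFromTo ψ Pᶜ P)) :
    IsAcyclic ψ (moveSet B (arcsFromTo ψ P Pᶜ) g) ∧
    (moveSet B (arcsFromTo ψ P Pᶜ) g).ncard = B.ncard ∧
    basin ψ (moveSet B (arcsFromTo ψ P Pᶜ) g) y = Pᶜ ∧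
    P ⊆ basin ψ (moveSet B (arcsFromTo ψ P Pᶜ) g) x ∧
    (∀ h : A → A, Set.InvOn h g (arcsFromTo ψ P Pᶜ) (arcsFromTo ψ Pᶜ P) →
      moveSet (moveSet B (arcsFromTo ψ P Pᶜ) g) (arcsFromTo ψ Pᶜ P) h = B) := by
  set S1 := arcsFromTo ψ P Pᶜ with hS1
  set S2 := arcsFromTo ψ Pᶜ P with hS2
  set B' := moveSet B S1 g with hB'
  -- basic closure facts about B
  have hclB : ∀ a ∈ B, (ψ a).2 ∈ P → (ψ a).1 ∈ P := by
    intro a ha h2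
    rw [← hP] at h2 ⊢
    exact basin_head ha h2
  have hfwdB : ∀ a ∈ B, (ψ a).1 ∈ Pᶜ → (ψ a).2 ∈ Pᶜ := by
    intro a ha h1 h2
    exact h1 (hclB a ha h2)
  have hBS2 : ∀ a ∈ B, a ∉ S2 := by
    intro a ha ⟨h1, h2⟩
    exact h1 (hclB a ha h2)
  -- y is outside P
  have hy : y ∈ Pᶜ := by
    obtain ⟨c, hc⟩ := (Set.ne_univ_iff_exists_notMem P).mp hne
    have hcy : c ∈ basin ψ B y := by
      have : c ∈ basin ψ B x ∪ basin ψ B y := by rw [hU]; trivial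
      rcases this with h | h
      · exact absurd (hP ▸ h) hc
      · exact h
    exact (reach_confine hfwdB (by exact hc) hcy).1
  -- membership case facts about B'
  have himg_sub : ∀ a ∈ g '' (B ∩ S1), a ∈ S2 := by
    rintro a ⟨b, ⟨_, hbS⟩, rfl⟩
    exact hg.mapsTo hbS
  have hmemB' : ∀ a ∈ B', (a ∈ B ∧ a ∉ S1) ∨ a ∈ S2 := by
    intro a ha
    rcases (mem_moveSet).mp ha with h | ⟨b, hb, hgb⟩
    · exact Or.inl h
    · exact Or.inr (hgb ▸ himg_sub _ ⟨b, ⟨hb.1, hb.2⟩, rfl⟩)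
  have hfwdB' : ∀ a ∈ B', (ψ a).1 ∈ P → (ψ a).2 ∈ P := by
    intro a ha h1
    by_contra h2
    rcases hmemB' a ha with ⟨haB, haS1⟩ | haS2
    · exact haS1 ⟨h1, h2⟩
    · exact haS2.1 h1
  have hsubPP : B' ∩ arcsFromTo ψ P P ⊆ B := by
    rintro a ⟨ha, h1, h2⟩
    rcases hmemB' a ha with ⟨haB, _⟩ | haS2
    · exact haB
    · exact absurd h1 haS2.1
  have hsubCC : B' ∩ arcsFromTo ψ Pᶜ Pᶜ ⊆ B := by
    rintro a ⟨ha, h1, h2⟩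
    rcases hmemB' a ha with ⟨haB, _⟩ | haS2
    · exact haB
    · exact absurd haS2.2 h2
  have hsupPP : B ∩ arcsFromTo ψ P P ⊆ B' := by
    rintro a ⟨ha, h1, h2⟩
    exact Set.mem_union_left _ ⟨ha, fun hS => hS.2 h2⟩
  have hsupCC : B ∩ arcsFromTo ψ Pᶜ Pᶜ ⊆ B' := by
    rintro a ⟨ha, h1, h2⟩
    exact Set.mem_union_left _ ⟨ha, fun hS => h1 hS.1⟩
  -- acyclicity
  have hacyc' : IsAcyclic ψ B' := by
    intro v hT
    by_cases hv : v ∈ P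
    · have h := (transGen_confine_fwd hfwdB' hv hT).2
      refine hacyc v (Relation.TransGen.mono ?_ _ _ h)
      intro p q ⟨a, ha, hae⟩
      exact ⟨a, hsubPP ha, hae⟩
    · have h := (transGen_confine_bwd hfwdB' (by exact hv) hT).2
      refine hacyc v (Relation.TransGen.mono ?_ _ _ h)
      intro p q ⟨a, ha, hae⟩
      exact ⟨a, hsubCC ha, hae⟩
  -- cardinality
  have hcard : B'.ncard = B.ncard := by
    have hdisj : Disjoint (B \ S1) (g '' (B ∩ S1)) := by
      rw [Set.disjoint_left]
      intro a haB haI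
      exact hBS2 a haB.1 (himg_sub a haI)
    have h1 : B'.ncard = (B \ S1).ncard + (g '' (B ∩ S1)).ncard :=
      Set.ncard_union_eq hdisj (Set.toFinite _) (Set.toFinite _)
    have h2 : (g '' (B ∩ S1)).ncard = (B ∩ S1).ncard :=
      Set.ncard_image_of_injOn (hg.injOn.mono Set.inter_subset_right)
    have h3 : (B \ S1).ncard + (B ∩ S1).ncard = B.ncard := by
      rw [← Set.ncard_union_eq Set.disjoint_sdiff_inter (Set.toFinite _) (Set.toFinite _),
        Set.diff_union_inter]
    rw [h1, h2, h3]
  -- basin of y is Pᶜ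
  have hbasiny : basin ψ B' y = Pᶜ := by
    apply Set.eq_of_subset_of_subset
    · intro u hu
      by_contra huP
      simp only [Set.mem_compl_iff, not_not] at huP
      have := (reach_confine hfwdB' huP hu).1
      exact hy this
    · intro u hu
      have huB : u ∈ basin ψ B y := by
        have : u ∈ basin ψ B x ∪ basin ψ B y := by rw [hU]; trivial
        rcases this with h | h
        · exact absurd (hP ▸ h) hu
        · exact h
      have := (reach_confine hfwdB hu huB).2
      exact canReach_mono hsupCC this
  -- P is contained in basin of x
  have hbasinx : P ⊆ basin ψ B' x := by
    intro u hu
    have hux : CanReach ψ B u x := by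
      have : u ∈ basin ψ B x := by rw [hP]; exact hu
      exact this
    have := reach_restrict_basin hux
    rw [hP] at this
    exact canReach_mono hsupPP this
  refine ⟨hacyc', hcard, hbasiny, hbasinx, ?_⟩
  -- inverse
  intro h hinv
  have hd1 : B' \ S2 = B \ S1 := by
    apply Set.eq_of_subset_of_subset
    · rintro a ⟨ha, haS2⟩
      rcases hmemB' a ha with ⟨haB, haS1⟩ | haS2'
      · exact ⟨haB, haS1⟩
      · exact absurd haS2' haS2
    · rintro a ⟨haB, haS1⟩
      exact ⟨Set.mem_union_left _ ⟨haB, haS1⟩, hBS2 a haB⟩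
  have hd2 : B' ∩ S2 = g '' (B ∩ S1) := by
    apply Set.eq_of_subset_of_subset
    · rintro a ⟨ha, haS2⟩
      rcases (mem_moveSet).mp ha with ⟨haB, _⟩ | ⟨b, hb, hgb⟩
      · exact absurd haS2 (hBS2 a haB)
      · exact ⟨b, ⟨hb.1, hb.2⟩, hgb⟩
    · intro a ha
      exact ⟨Set.mem_union_right _ ha, himg_sub a ha⟩
  have hd3 : h '' (g '' (B ∩ S1)) = B ∩ S1 := by
    rw [← Set.image_comp]
    have : Set.EqOn (h ∘ g) id (B ∩ S1) := fun a ha => hinv.1 ha.2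
    rw [Set.image_congr this, Set.image_id]
  show B' \ S2 ∪ h '' (B' ∩ S2) = B
  rw [hd1, hd2, hd3, Set.diff_union_inter]

end Aux

/-- For a balanced multidigraph, the number of `s`-convergences of
size `k` equals the number of `t`-convergences of size `k`, for any vertices `s, t`. -/
theorem gamma_independent_of_root {V A : Type*} [Fintype V] [Fintype A]
    (ψ : A → V × V) (hbal : IsBalanced ψ) (k : ℕ) (s t : V) :
    gammaCount ψ k s = gammaCount ψ k t := by
  classical
  -- choose bridge-swapping bijections for every P
  choose gf hf hbij hinv using fun P : Set V => existsSwapArcs hbal P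
  set 𝒰 : Set (Set A) := Uset ψ s t k with h𝒰
  set Ns : Set (Set A) := {B ∈ 𝒰 | basin ψ B s ≠ Set.univ} with hNs
  set Nt : Set (Set A) := {B ∈ 𝒰 | basin ψ B t ≠ Set.univ} with hNt
  have hNsub : Ns ⊆ 𝒰 := fun B hB => hB.1
  have hNtsub : Nt ⊆ 𝒰 := fun B hB => hB.1
  -- γ_k(s) = |𝒰| - |Ns|
  have hconv_s : {B : Set A | IsConvergence ψ B s ∧ B.ncard = k} = 𝒰 \ Ns := by
    ext B
    constructor
    · rintro ⟨⟨hacyc, hall⟩, hk⟩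
      have hbs : basin ψ B s = Set.univ := Set.eq_univ_of_forall fun v => hall v
      have hU : B ∈ 𝒰 := ⟨hacyc, hk, by rw [hbs, Set.univ_union]⟩
      exact ⟨hU, fun hmem => hmem.2 hbs⟩
    · rintro ⟨⟨hacyc, hk, _⟩, hnot⟩
      have hbs : basin ψ B s = Set.univ := by
        by_contra hne
        exact hnot ⟨⟨hacyc, hk, ‹_›⟩, hne⟩
      exact ⟨⟨hacyc, fun v => by have : v ∈ basin ψ B s := hbs ▸ Set.mem_univ v; exact this⟩, hk⟩
  have hconv_t : {B : Set A | IsConvergence ψ B t ∧ B.ncard = k} = 𝒰 \ Nt := by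
    ext B
    constructor
    · rintro ⟨⟨hacyc, hall⟩, hk⟩
      have hbt : basin ψ B t = Set.univ := Set.eq_univ_of_forall fun v => hall v
      have hU : B ∈ 𝒰 := ⟨hacyc, hk, by rw [hbt, Set.union_univ]⟩
      exact ⟨hU, fun hmem => hmem.2 hbt⟩
    · rintro ⟨⟨hacyc, hk, _⟩, hnot⟩
      have hbt : basin ψ B t = Set.univ := by
        by_contra hne
        exact hnot ⟨⟨hacyc, hk, ‹_›⟩, hne⟩
      exact ⟨⟨hacyc, fun v => by have : v ∈ basin ψ B t := hbt ▸ Set.mem_univ v; exact this⟩, hk⟩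
  -- the bijection Φ : Ns → Nt
  set Φ : Set A → Set A := fun B =>
    moveSet B (arcsFromTo ψ (basin ψ B s) (basin ψ B s)ᶜ) (gf (basin ψ B s)) with hΦ
  have hpack : ∀ B ∈ Ns,
      IsAcyclic ψ (Φ B) ∧ (Φ B).ncard = B.ncard ∧
      basin ψ (Φ B) t = (basin ψ B s)ᶜ ∧ (basin ψ B s) ⊆ basin ψ (Φ B) s ∧
      (∀ h : A → A, Set.InvOn h (gf (basin ψ B s))
        (arcsFromTo ψ (basin ψ B s) (basin ψ B s)ᶜ)
        (arcsFromTo ψ (basin ψ B s)ᶜ (basin ψ B s)) →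
        moveSet (Φ B) (arcsFromTo ψ (basin ψ B s)ᶜ (basin ψ B s)) h = B) := by
    rintro B ⟨⟨hacyc, hk, hU⟩, hne⟩
    exact move_pack rfl hacyc hU hne (hbij _)
  have hmaps : Set.MapsTo Φ Ns Nt := by
    rintro B hB
    obtain ⟨hacyc', hcard, hbt, hbs, _⟩ := hpack B hB
    obtain ⟨⟨hacyc, hk, hU⟩, hne⟩ := hB
    have hsP : s ∈ basin ψ B s := self_mem_basin ψ B s
    refine ⟨⟨hacyc', hcard.trans hk, ?_⟩, ?_⟩
    · apply Set.eq_univ_of_forall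
      intro v
      by_cases hv : v ∈ basin ψ B s
      · exact Set.mem_union_left _ (hbs hv)
      · exact Set.mem_union_right _ (hbt ▸ hv)
    · rw [hbt]
      intro hcompl
      have : s ∈ (basin ψ B s)ᶜ := hcompl ▸ Set.mem_univ s
      exact this hsP
  have hinj : Set.InjOn Φ Ns := by
    intro B1 h1 B2 h2 heq
    obtain ⟨_, _, hbt1, _, hback1⟩ := hpack B1 h1
    obtain ⟨_, _, hbt2, _, hback2⟩ := hpack B2 h2
    have hPeq : basin ψ B1 s = basin ψ B2 s := by
      have : (basin ψ B1 s)ᶜ = (basin ψ B2 s)ᶜ := by rw [← hbt1, ← hbt2, heq]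
      exact compl_injective this
    have e1 := hback1 (hf (basin ψ B1 s)) (hinv _)
    have e2 := hback2 (hf (basin ψ B2 s)) (hinv _)
    rw [← e1, ← e2, heq, hPeq]
  have hsurj : Set.SurjOn Φ Ns Nt := by
    rintro B' ⟨⟨hacyc, hk, hU⟩, hne⟩
    set Q := basin ψ B' t with hQ
    have hbij' : Set.BijOn (hf Qᶜ) (arcsFromTo ψ Q Qᶜ) (arcsFromTo ψ Qᶜ Q) := by
      have := Set.BijOn.symm (Set.InvOn.symm (hinv Qᶜ)) (hbij Qᶜ)
      rwa [compl_compl] at this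
    have hU' : basin ψ B' t ∪ basin ψ B' s = Set.univ := by rw [Set.union_comm]; exact hU
    obtain ⟨hacyc2, hcard2, hbs2, hbt2, hback⟩ :=
      move_pack (x := t) (y := s) rfl hacyc hU' hne hbij'
    set B : Set A := moveSet B' (arcsFromTo ψ Q Qᶜ) (hf Qᶜ) with hB
    have htQ : t ∈ Q := self_mem_basin ψ B' t
    have hBNs : B ∈ Ns := by
      refine ⟨⟨hacyc2, hcard2.trans hk, ?_⟩, ?_⟩
      · apply Set.eq_univ_of_forall
        intro v
        by_cases hv : v ∈ Q
        · exact Set.mem_union_right _ (hbt2 hv)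
        · exact Set.mem_union_left _ (hbs2 ▸ hv)
      · rw [hbs2]
        intro hcompl
        have : t ∈ Qᶜ := hcompl ▸ Set.mem_univ t
        exact this htQ
    refine ⟨B, hBNs, ?_⟩
    have hΦB : Φ B = moveSet B (arcsFromTo ψ Qᶜ Q) (gf Qᶜ) := by
      rw [hΦ]
      simp only
      rw [hbs2, compl_compl]
    rw [hΦB]
    apply hback
    have := (hinv Qᶜ).symm
    rwa [compl_compl] at this
  have hbijΦ : Set.BijOn Φ Ns Nt := ⟨hmaps, hinj, hsurj⟩
  have hNcard : Ns.ncard = Nt.ncard := by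
    rw [← hbijΦ.image_eq, Set.ncard_image_of_injOn hinj]
  have hfin : Ns.Finite := Set.toFinite _
  have hfin' : Nt.Finite := Set.toFinite _
  rw [gammaCount, gammaCount, hconv_s, hconv_t, Set.ncard_diff hNsub, Set.ncard_diff hNtsub,
    hNcard]
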